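/- (Abstract form of the paper's Theorem 3.) Under hypotheses (H1)–(H3), the functors Z and Z' are equivalent as monoidal functors: there exists a monoidal natural isomorphism F : Z ≅ Z'. In particular, any two strong monoidal functors C ⥤ ModuleCat k with one-dimensional values which agree and are nonvanishing on all endomorphisms of the unit object are monoidally naturally isomorphic; applied to C = 4Cob, any two TQFTs whose partition function on every closed oriented 4-manifold M is y^{σ(M)} (y ≠ 0) are equivalent, so the BF theory Z with y = exp(−36π²i/Λ) is equivalent to the Crane–Yetter–Broda TQFT. -/

import Mathlib

open CategoryTheory MonoidalCategory

universe v u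

/-- The distinguished vector `ε_Z(1) ∈ Z(𝟙)` determined by the unit isomorphism
`ε_Z : k ≅ Z(𝟙)` of a (strong) monoidal functor `Z : C ⥤ ModuleCat k`. -/
noncomputable def unitVec {k : Type*} [Field k] {C : Type u} [Category.{v} C]
    [MonoidalCategory C] (Z : C ⥤ ModuleCat k) [Z.Monoidal] : Z.obj (𝟙_ C) :=
  Functor.LaxMonoidal.ε Z (1 : k)

section Aux

open Functor.LaxMonoidal Functor.OplaxMonoidal

variable {k : Type*} [Field k] {C : Type u} [Category.{v} C] [MonoidalCategory C]

lemma unitVec_ne_zero (Z : C ⥤ ModuleCat k) [Z.Monoidal] : unitVec Z ≠ 0 := by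
  intro h
  have h1 : η Z ((ε Z) (1 : k)) = (1 : k) :=
    ConcreteCategory.congr_hom (Functor.Monoidal.ε_η (F := Z)) (1 : k)
  rw [show (ε Z) (1 : k) = unitVec Z from rfl, h, map_zero] at h1
  exact one_ne_zero h1.symm

lemma mu_unitVec (Z : C ⥤ ModuleCat k) [Z.Monoidal] :
    μ Z (𝟙_ C) (𝟙_ C) (unitVec Z ⊗ₜ[k] unitVec Z) =
      Z.map (λ_ (𝟙_ C)).inv (unitVec Z) := by
  have h := left_unitality_inv Z (𝟙_ C)
  have h2 : (μ Z (𝟙_ C) (𝟙_ C))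
      ((ε Z ▷ Z.obj (𝟙_ C)) ((λ_ (Z.obj (𝟙_ C))).inv (unitVec Z))) =
      Z.map (λ_ (𝟙_ C)).inv (unitVec Z) := ConcreteCategory.congr_hom h (unitVec Z)
  rw [← h2]
  congr 1

lemma mu_map_tmul (Z : C ⥤ ModuleCat k) [Z.Monoidal] {X Y : C}
    (f : 𝟙_ C ⟶ X) (g : 𝟙_ C ⟶ Y) :
    μ Z X Y (Z.map f (unitVec Z) ⊗ₜ[k] Z.map g (unitVec Z)) =
      Z.map ((λ_ (𝟙_ C)).inv ≫ (f ⊗ₘ g)) (unitVec Z) := by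
  have h2 : (μ Z X Y) (Z.map f (unitVec Z) ⊗ₜ[k] Z.map g (unitVec Z)) =
      Z.map (f ⊗ₘ g) ((μ Z (𝟙_ C) (𝟙_ C)) (unitVec Z ⊗ₜ[k] unitVec Z)) :=
    ConcreteCategory.congr_hom (μ_natural Z f g) (unitVec Z ⊗ₜ[k] unitVec Z)
  rw [h2, mu_unitVec, Z.map_comp]
  rfl

end Aux

/-- Abstract form of the paper's Theorem 3: under (H1)–(H3), the strong monoidal functors
`Z` and `Z'` are equivalent as monoidal functors, i.e. there is a monoidal natural
isomorphism `F : Z ≅ Z'`.  (Applied to `C = 4Cob`, any two TQFTs whose partition function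
on every closed oriented 4-manifold `M` is `y^{σ(M)}` with `y ≠ 0` are equivalent; hence
the BF theory with `y = exp(−36π²i/Λ)` is equivalent to the Crane–Yetter–Broda TQFT.) -/
theorem exists_monoidal_nat_iso {k : Type*} [Field k] {C : Type u} [Category.{v} C]
    [MonoidalCategory C] (Z Z' : C ⥤ ModuleCat k) [Z.Monoidal] [Z'.Monoidal]
    -- (H1): every object admits a morphism from and a morphism to the unit object
    (H1 : ∀ X : C, Nonempty (𝟙_ C ⟶ X) ∧ Nonempty (X ⟶ 𝟙_ C))
    -- (H2): for every `f : 𝟙 ⟶ 𝟙` the scalars `⟨Z(f)⟩` and `⟨Z'(f)⟩` agree and are nonzero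
    (H2 : ∀ f : 𝟙_ C ⟶ 𝟙_ C, ∃ c : k, c ≠ 0 ∧
      Z.map f (unitVec Z) = c • unitVec Z ∧ Z'.map f (unitVec Z') = c • unitVec Z')
    -- (H3): all state spaces are one-dimensional
    (H3 : ∀ X : C, Module.finrank k (Z.obj X) = 1 ∧ Module.finrank k (Z'.obj X) = 1) :
    ∃ F : Z ≅ Z', NatTrans.IsMonoidal F.hom := by
  classical
  have hu : unitVec Z ≠ 0 := unitVec_ne_zero Z
  have hu' : unitVec Z' ≠ 0 := unitVec_ne_zero Z'
  let M : ∀ X : C, 𝟙_ C ⟶ X := fun X => (H1 X).1.some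
  let N : ∀ X : C, X ⟶ 𝟙_ C := fun X => (H1 X).2.some
  let v : ∀ X : C, Z.obj X := fun X => Z.map (M X) (unitVec Z)
  let v' : ∀ X : C, Z'.obj X := fun X => Z'.map (M X) (unitVec Z')
  choose c₀ hc₀ hc₀Z hc₀Z' using fun X => H2 (M X ≫ N X)
  have hNv : ∀ X, Z.map (N X) (v X) = c₀ X • unitVec Z := by
    intro X
    have h := hc₀Z X
    rwa [Z.map_comp, ConcreteCategory.comp_apply] at h
  have hNv' : ∀ X, Z'.map (N X) (v' X) = c₀ X • unitVec Z' := by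
    intro X
    have h := hc₀Z' X
    rwa [Z'.map_comp, ConcreteCategory.comp_apply] at h
  have hv : ∀ X, v X ≠ 0 := by
    intro X h
    have h2 := hNv X
    rw [h, map_zero] at h2
    exact hu (by simpa [hc₀ X] using (smul_eq_zero.mp h2.symm).resolve_left (hc₀ X))
  have hv' : ∀ X, v' X ≠ 0 := by
    intro X h
    have h2 := hNv' X
    rw [h, map_zero] at h2
    exact hu' (by simpa [hc₀ X] using (smul_eq_zero.mp h2.symm).resolve_left (hc₀ X))
  have hspan : ∀ X, Submodule.span k {v X} = ⊤ := fun X =>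
    (finrank_eq_one_iff_of_nonzero (v X) (hv X)).mp (H3 X).1
  have hspan' : ∀ X, Submodule.span k {v' X} = ⊤ := fun X =>
    (finrank_eq_one_iff_of_nonzero (v' X) (hv' X)).mp (H3 X).2
  have hex : ∀ X (w : Z.obj X), ∃ a : k, a • v X = w := fun X =>
    (finrank_eq_one_iff_of_nonzero' (v X) (hv X)).mp (H3 X).1
  have hex' : ∀ X (w : Z'.obj X), ∃ a : k, a • v' X = w := fun X =>
    (finrank_eq_one_iff_of_nonzero' (v' X) (hv' X)).mp (H3 X).2
  -- Key transfer lemma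
  have key : ∀ (X : C) (f : 𝟙_ C ⟶ X) (a : k),
      Z.map f (unitVec Z) = a • v X → Z'.map f (unitVec Z') = a • v' X := by
    intro X f a ha
    obtain ⟨c, hc, h1, h2⟩ := H2 (f ≫ N X)
    rw [Z.map_comp, ConcreteCategory.comp_apply, ha, map_smul, hNv X,
      smul_smul] at h1
    rw [Z'.map_comp, ConcreteCategory.comp_apply] at h2
    obtain ⟨b, hb⟩ := hex' X (Z'.map f (unitVec Z'))
    rw [← hb, map_smul, hNv' X, smul_smul] at h2
    have hac : a * c₀ X = c := smul_left_injective k hu h1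
    have hbc : b * c₀ X = c := smul_left_injective k hu' h2
    have hab : b = a := mul_right_cancel₀ (hc₀ X) (hbc.trans hac.symm)
    rw [← hb, hab]
  -- coordinate equivalences
  let E : ∀ X : C, k ≃ₗ[k] Z.obj X := fun X =>
    (LinearEquiv.toSpanNonzeroSingleton k _ (v X) (hv X)).trans
      (LinearEquiv.ofTop _ (hspan X))
  let E' : ∀ X : C, k ≃ₗ[k] Z'.obj X := fun X =>
    (LinearEquiv.toSpanNonzeroSingleton k _ (v' X) (hv' X)).trans
      (LinearEquiv.ofTop _ (hspan' X))
  have hE : ∀ X (a : k), E X a = a • v X := by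
    intro X a
    simp [E, LinearEquiv.trans_apply, LinearEquiv.toSpanNonzeroSingleton_apply,
      LinearEquiv.ofTop_apply]
  have hE' : ∀ X (a : k), E' X a = a • v' X := by
    intro X a
    simp [E', LinearEquiv.trans_apply, LinearEquiv.toSpanNonzeroSingleton_apply,
      LinearEquiv.ofTop_apply]
  let e : ∀ X : C, Z.obj X ≃ₗ[k] Z'.obj X := fun X => (E X).symm.trans (E' X)
  have heq : ∀ X (a : k), e X (a • v X) = a • v' X := by
    intro X a
    show E' X ((E X).symm (a • v X)) = a • v' X
    rw [← hE X a, LinearEquiv.symm_apply_apply, hE' X a]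
  -- naturality
  have hnat : ∀ {X Y : C} (g : X ⟶ Y),
      Z.map g ≫ (e Y).toModuleIso.hom = (e X).toModuleIso.hom ≫ Z'.map g := by
    intro X Y g
    refine ModuleCat.hom_ext (LinearMap.ext_on (hspan X) ?_)
    intro x hx
    rw [Set.mem_singleton_iff] at hx
    subst hx
    obtain ⟨a, ha⟩ := hex Y (Z.map g (v X))
    have hZg : Z.map (M X ≫ g) (unitVec Z) = a • v Y := by
      rw [Z.map_comp, ConcreteCategory.comp_apply, ha]
    have hZ'g : Z'.map g (v' X) = a • v' Y := by
      have h := key Y (M X ≫ g) a hZg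
      rwa [Z'.map_comp, ConcreteCategory.comp_apply] at h
    show (e Y) (Z.map g (v X)) = Z'.map g ((e X) (v X))
    have hvx : (e X) (v X) = v' X := by
      have := heq X 1
      simpa using this
    rw [hvx, hZ'g, ← ha, heq]
  refine ⟨NatIso.ofComponents (fun X => (e X).toModuleIso) hnat, ?_⟩
  constructor
  · -- unit
    apply ModuleCat.hom_ext
    apply LinearMap.ext_ring
    show (e (𝟙_ C)) (Functor.LaxMonoidal.ε Z (1 : k)) = Functor.LaxMonoidal.ε Z' (1 : k)
    obtain ⟨c₁, hc₁, h1, h2⟩ := H2 (M (𝟙_ C))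
    have huv : unitVec Z = c₁⁻¹ • v (𝟙_ C) := by
      rw [show v (𝟙_ C) = Z.map (M (𝟙_ C)) (unitVec Z) from rfl, h1, smul_smul,
        inv_mul_cancel₀ hc₁, one_smul]
    have huv' : (c₁⁻¹ : k) • v' (𝟙_ C) = unitVec Z' := by
      rw [show v' (𝟙_ C) = Z'.map (M (𝟙_ C)) (unitVec Z') from rfl, h2, smul_smul,
        inv_mul_cancel₀ hc₁, one_smul]
    show (e (𝟙_ C)) (unitVec Z) = unitVec Z'
    rw [huv, heq, huv']
  · -- tensor
    intro X Y
    refine ModuleCat.hom_ext (TensorProduct.ext' ?_)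
    intro x y
    obtain ⟨a, ha⟩ := hex X x
    obtain ⟨b, hb⟩ := hex Y y
    subst ha hb
    obtain ⟨p, hp⟩ := hex (X ⊗ Y)
      (Z.map ((λ_ (𝟙_ C)).inv ≫ (M X ⊗ₘ M Y)) (unitVec Z))
    have hμZ : Functor.LaxMonoidal.μ Z X Y (v X ⊗ₜ[k] v Y) = p • v (X ⊗ Y) := by
      rw [show v X = Z.map (M X) (unitVec Z) from rfl,
        show v Y = Z.map (M Y) (unitVec Z) from rfl, mu_map_tmul, hp]
    have hμZ' : Functor.LaxMonoidal.μ Z' X Y (v' X ⊗ₜ[k] v' Y) = p • v' (X ⊗ Y) := by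
      rw [show v' X = Z'.map (M X) (unitVec Z') from rfl,
        show v' Y = Z'.map (M Y) (unitVec Z') from rfl, mu_map_tmul]
      exact key (X ⊗ Y) ((λ_ (𝟙_ C)).inv ≫ (M X ⊗ₘ M Y)) p hp.symm
    show (e (X ⊗ Y)) (Functor.LaxMonoidal.μ Z X Y ((a • v X) ⊗ₜ[k] (b • v Y))) =
      Functor.LaxMonoidal.μ Z' X Y ((e X) (a • v X) ⊗ₜ[k] (e Y) (b • v Y))
    have hsm : (a • v X) ⊗ₜ[k] (b • v Y) = (a * b) • (v X ⊗ₜ[k] v Y) := by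
      rw [TensorProduct.tmul_smul, TensorProduct.smul_tmul', smul_smul, mul_comm b a,
        TensorProduct.smul_tmul']
    have hsm' : (a • v' X) ⊗ₜ[k] (b • v' Y) = (a * b) • (v' X ⊗ₜ[k] v' Y) := by
      rw [TensorProduct.tmul_smul, TensorProduct.smul_tmul', smul_smul, mul_comm b a,
        TensorProduct.smul_tmul']
    have hL : (e (X ⊗ Y)) (Functor.LaxMonoidal.μ Z X Y ((a • v X) ⊗ₜ[k] (b • v Y))) =
        (a * b * p) • v' (X ⊗ Y) := by
      rw [hsm, map_smul, hμZ, smul_smul, heq]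
    have hR : Functor.LaxMonoidal.μ Z' X Y ((e X) (a • v X) ⊗ₜ[k] (e Y) (b • v Y)) =
        (a * b * p) • v' (X ⊗ Y) := by
      rw [heq, heq, hsm', map_smul, hμZ', smul_smul]
    rw [hL, hR]
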